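/- Fix n ≥ 1. In the formal power series ring ℤ[[t,v]] in two variables, let F_n = t · (1−tv)^{−1} · ∏_{k=1}^{n} (1−t^k v^{k−1})^{−1} (each factor has constant term 1 and hence is invertible). Then the coefficient of t^n v^{n−1} in F_n equals 1, and for every i ≥ n the coefficient of t^n v^i in F_n equals 0. (This is the computation, carried out in the proof of Corollary 5.4, showing that the generating function t/(1−tv) · ∏_{k≥1} 1/(1−t^k v^{k−1}) of Cheah's cell counts for the zero fibers Z_{n,n−1} has, for each n, a polynomial coefficient of t^n in v of degree exactly n−1; hence the zero fiber Z_{n,n−1} has dimension n−1.) -/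

import Mathlib

open MvPowerSeries Finset

noncomputable section

/-- The variable `t` in `ℤ[[t,v]]`. -/
def tP : MvPowerSeries (Fin 2) ℤ := MvPowerSeries.X 0

/-- The variable `v` in `ℤ[[t,v]]`. -/
def vP : MvPowerSeries (Fin 2) ℤ := MvPowerSeries.X 1

/-- `F_n = t·(1-tv)⁻¹·∏_{k=1}^{n}(1-t^k v^{k-1})⁻¹` in `ℤ[[t,v]]`; each factor has
constant term `1` and is inverted via `invOfUnit`. -/
def F (n : ℕ) : MvPowerSeries (Fin 2) ℤ :=
  tP * MvPowerSeries.invOfUnit (1 - tP * vP) 1 *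
    ∏ k ∈ Finset.range n,
      MvPowerSeries.invOfUnit (1 - tP ^ (k + 1) * vP ^ k) 1

namespace CheahAux

/-- The weight `d(t) - d(v)` of a monomial exponent. -/
def Wt (d : Fin 2 →₀ ℕ) : ℤ := (d 0 : ℤ) - (d 1 : ℤ)

lemma Wt_add (a b : Fin 2 →₀ ℕ) : Wt (a + b) = Wt a + Wt b := by
  simp only [Wt, Finsupp.add_apply]
  push_cast
  ring

lemma Wt_zero : Wt 0 = 0 := by simp [Wt]

/-- A power series supported in weight `≥ 0` whose only weight-`≤0` coefficient
is the constant term `1`. -/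
def Nice (G : MvPowerSeries (Fin 2) ℤ) : Prop :=
  ∀ d, Wt d ≤ 0 → MvPowerSeries.coeff d G = if d = 0 then 1 else 0

lemma nice_one : Nice 1 := fun d _ => MvPowerSeries.coeff_one d

lemma nice_mul {G H} (hG : Nice G) (hH : Nice H) : Nice (G * H) := by
  intro d hd
  rw [MvPowerSeries.coeff_mul]
  by_cases h0 : d = 0
  · subst h0
    rw [if_pos rfl, Finsupp.antidiagonal_zero, Finset.sum_singleton,
      hG 0 Wt_zero.le, hH 0 Wt_zero.le]
    simp
  · rw [if_neg h0]
    apply Finset.sum_eq_zero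
    intro p hp
    rw [Finset.HasAntidiagonal.mem_antidiagonal] at hp
    have hw : Wt p.1 + Wt p.2 ≤ 0 := by rw [← Wt_add, hp]; exact hd
    rcases le_or_gt (Wt p.1) 0 with h1 | h1
    · rw [hG p.1 h1]
      by_cases e1 : p.1 = 0
      · have h2 : Wt p.2 ≤ 0 := by
          have := Wt_zero ▸ e1 ▸ hw
          linarith [Wt_zero, (e1 ▸ hw : Wt (0 : Fin 2 →₀ ℕ) + Wt p.2 ≤ 0)]
        rw [if_pos e1, hH p.2 h2, one_mul]
        have e2 : p.2 ≠ 0 := by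
          intro h
          apply h0
          rw [← hp, e1, h, add_zero]
        rw [if_neg e2]
      · rw [if_neg e1, zero_mul]
    · have h2 : Wt p.2 < 0 := by linarith
      rw [hH p.2 h2.le, if_neg (fun h => by simp [h, Wt_zero] at h2), mul_zero]

open scoped Classical in
/-- The geometric series `∑_m (monomial e 1)^m`. -/
def Geom (e : Fin 2 →₀ ℕ) : MvPowerSeries (Fin 2) ℤ :=
  fun d => if ∃ m : ℕ, d = m • e then 1 else 0

open scoped Classical in
lemma coeff_Geom (e d : Fin 2 →₀ ℕ) :
    MvPowerSeries.coeff d (Geom e) = if ∃ m : ℕ, d = m • e then 1 else 0 :=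
  rfl

lemma mul_Geom (e : Fin 2 →₀ ℕ) (he : e ≠ 0) :
    (1 - MvPowerSeries.monomial e 1) * Geom e = 1 := by
  classical
  ext d
  rw [sub_mul, one_mul, map_sub, MvPowerSeries.coeff_monomial_mul,
    MvPowerSeries.coeff_one]
  simp only [coeff_Geom, one_mul]
  by_cases h0 : d = 0
  · subst h0
    rw [if_pos ⟨0, by simp⟩, if_neg (fun h : e ≤ 0 => he (le_antisymm h zero_le)),
      if_pos rfl, sub_zero]
  · rw [if_neg h0]
    by_cases hm : ∃ m : ℕ, d = m • e
    · obtain ⟨m, rfl⟩ := hm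
      rcases m with _ | m'
      · simp at h0
      · have hrw : (m' + 1) • e = m' • e + e := succ_nsmul e m'
        have hle : e ≤ (m' + 1) • e := by rw [hrw]; exact le_add_self
        have hsub : (m' + 1) • e - e = m' • e := by rw [hrw, add_tsub_cancel_right]
        rw [if_pos ⟨m' + 1, rfl⟩, if_pos hle, hsub, if_pos ⟨m', rfl⟩, sub_self]
    · rw [if_neg hm]
      by_cases hle : e ≤ d
      · rw [if_pos hle]
        have hno : ¬ ∃ m : ℕ, d - e = m • e := by
          rintro ⟨m, hmm⟩
          exact hm ⟨m + 1, by rw [succ_nsmul, ← hmm, tsub_add_cancel_of_le hle]⟩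
        rw [if_neg hno, zero_sub, neg_zero]
      · rw [if_neg hle, sub_zero]

lemma invOfUnit_eq_Geom (e : Fin 2 →₀ ℕ) (he : e ≠ 0) :
    MvPowerSeries.invOfUnit (1 - MvPowerSeries.monomial e 1) 1 = Geom e := by
  classical
  have hc : MvPowerSeries.constantCoeff (1 - MvPowerSeries.monomial e 1)
      = ((1 : ℤˣ) : ℤ) := by
    rw [map_sub, map_one]
    have : MvPowerSeries.constantCoeff (MvPowerSeries.monomial e (1 : ℤ)) = 0 := by
      rw [← MvPowerSeries.coeff_zero_eq_constantCoeff_apply, MvPowerSeries.coeff_monomial,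
        if_neg (by exact fun h => he h.symm)]
    rw [this, sub_zero, Units.val_one]
  have h1 := MvPowerSeries.mul_invOfUnit (1 - MvPowerSeries.monomial e 1) 1 hc
  have h2 := mul_Geom e he
  calc MvPowerSeries.invOfUnit (1 - MvPowerSeries.monomial e 1) 1
      = (Geom e * (1 - MvPowerSeries.monomial e 1)) *
        MvPowerSeries.invOfUnit (1 - MvPowerSeries.monomial e 1) 1 := by
        rw [mul_comm (Geom e), h2, one_mul]
    _ = Geom e * ((1 - MvPowerSeries.monomial e 1) *
        MvPowerSeries.invOfUnit (1 - MvPowerSeries.monomial e 1) 1) := by ring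
    _ = Geom e := by rw [h1, mul_one]

lemma Wt_smul (m : ℕ) (e : Fin 2 →₀ ℕ) : Wt (m • e) = m * Wt e := by
  simp only [Wt, Finsupp.smul_apply, smul_eq_mul]
  push_cast
  ring

lemma nice_Geom (e : Fin 2 →₀ ℕ) (he : 1 ≤ Wt e) : Nice (Geom e) := by
  intro d hd
  rw [coeff_Geom]
  by_cases h0 : d = 0
  · rw [if_pos ⟨0, by simp [h0]⟩, if_pos h0]
  · rw [if_neg h0, if_neg]
    rintro ⟨m, rfl⟩
    rw [Wt_smul] at hd
    have hm : m ≠ 0 := fun h => h0 (by simp [h])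
    have : (1 : ℤ) ≤ m * Wt e := by
      have : (1 : ℤ) ≤ m := by exact_mod_cast Nat.one_le_iff_ne_zero.mpr hm
      nlinarith
    linarith

lemma coeff_Geom_e11 (d : Fin 2 →₀ ℕ) :
    MvPowerSeries.coeff d (Geom (Finsupp.single 0 1 + Finsupp.single 1 1))
      = if d 0 = d 1 then 1 else 0 := by
  classical
  rw [coeff_Geom]
  by_cases h : d 0 = d 1
  · rw [if_pos h, if_pos]
    refine ⟨d 0, ?_⟩
    ext x
    fin_cases x <;>
      simp [Finsupp.smul_apply, Finsupp.add_apply, Finsupp.single_apply] <;> omega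
  · rw [if_neg h, if_neg]
    rintro ⟨m, rfl⟩
    simp [Finsupp.smul_apply, Finsupp.add_apply, Finsupp.single_apply] at h

lemma key {Q : MvPowerSeries (Fin 2) ℤ} (hQ : Nice Q) (d : Fin 2 →₀ ℕ) (hd : Wt d ≤ 0) :
    MvPowerSeries.coeff d (Geom (Finsupp.single 0 1 + Finsupp.single 1 1) * Q)
      = if d 0 = d 1 then 1 else 0 := by
  classical
  rw [MvPowerSeries.coeff_mul]
  have hzero : ∀ p ∈ Finset.HasAntidiagonal.antidiagonal d, p ≠ (d, (0 : Fin 2 →₀ ℕ)) →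
      MvPowerSeries.coeff p.1 (Geom (Finsupp.single 0 1 + Finsupp.single 1 1)) *
        MvPowerSeries.coeff p.2 Q = 0 := by
    intro p hp hne
    rw [Finset.HasAntidiagonal.mem_antidiagonal] at hp
    by_cases h : p.1 0 = p.1 1
    · have hw1 : Wt p.1 = 0 := by simp [Wt, h]
      have hw2 : Wt p.2 ≤ 0 := by
        have h3 := Wt_add p.1 p.2
        rw [hp] at h3
        linarith
      rw [hQ p.2 hw2, if_neg, mul_zero]
      intro h2
      apply hne
      have h4 : p.1 = d := by rw [← hp, h2, add_zero]
      exact Prod.ext h4 h2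
    · rw [coeff_Geom_e11, if_neg h, zero_mul]
  rw [Finset.sum_eq_single_of_mem (d, (0 : Fin 2 →₀ ℕ))
      (by rw [Finset.HasAntidiagonal.mem_antidiagonal, add_zero]) hzero,
    hQ 0 Wt_zero.le, if_pos rfl, mul_one, coeff_Geom_e11]

end CheahAux

open CheahAux

/-- The coefficient of `t^n v^{n-1}` in `F_n` equals `1`, and the coefficient of
`t^n v^i` vanishes for all `i ≥ n`: the coefficient of `t^n` in the generating
function of Cheah's cell counts for the zero fiber `Z_{n,n-1}` is a polynomial in
`v` of degree exactly `n-1`, so `Z_{n,n-1}` has dimension `n-1`. -/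
theorem cheah_generating_function_degree (n : ℕ) (hn : 1 ≤ n) :
    (MvPowerSeries.coeff (Finsupp.single 0 n + Finsupp.single 1 (n - 1)) (F n) = 1) ∧
    ∀ i : ℕ, n ≤ i →
      MvPowerSeries.coeff (Finsupp.single 0 n + Finsupp.single 1 i) (F n) = 0 := by
  classical
  -- the second factor is the geometric series in `tv`
  have hD : MvPowerSeries.invOfUnit (1 - tP * vP) 1
      = Geom (Finsupp.single 0 1 + Finsupp.single 1 1) := by
    have he : (Finsupp.single 0 1 + Finsupp.single 1 1 : Fin 2 →₀ ℕ) ≠ 0 := by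
      intro h
      have := DFunLike.congr_fun h (0 : Fin 2)
      simp [Finsupp.single_apply] at this
    have : tP * vP = MvPowerSeries.monomial
        (Finsupp.single 0 1 + Finsupp.single 1 1) 1 := by
      simp only [tP, vP, MvPowerSeries.X_def, MvPowerSeries.monomial_mul_monomial, one_mul]
    rw [this, invOfUnit_eq_Geom _ he]
  -- the big product is `Nice`
  have hQ : Nice (∏ k ∈ Finset.range n,
      MvPowerSeries.invOfUnit (1 - tP ^ (k + 1) * vP ^ k) 1) := by
    apply Finset.prod_induction _ Nice (fun _ _ => nice_mul) nice_one
    intro k _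
    have he : (Finsupp.single 0 (k + 1) + Finsupp.single 1 k : Fin 2 →₀ ℕ) ≠ 0 := by
      intro h
      have := DFunLike.congr_fun h (0 : Fin 2)
      simp [Finsupp.single_apply] at this
    have hfac : tP ^ (k + 1) * vP ^ k = MvPowerSeries.monomial
        (Finsupp.single 0 (k + 1) + Finsupp.single 1 k) 1 := by
      simp only [tP, vP, MvPowerSeries.X_pow_eq, MvPowerSeries.monomial_mul_monomial, one_mul]
    rw [hfac, invOfUnit_eq_Geom _ he]
    apply nice_Geom
    simp [Wt, Finsupp.add_apply, Finsupp.single_apply]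
  -- main coefficient computation
  have main : ∀ i : ℕ, n - 1 ≤ i →
      MvPowerSeries.coeff (Finsupp.single 0 n + Finsupp.single 1 i) (F n)
        = if n - 1 = i then 1 else 0 := by
    intro i hi
    have hle : (Finsupp.single 0 1 : Fin 2 →₀ ℕ) ≤ Finsupp.single 0 n + Finsupp.single 1 i := by
      rw [Finsupp.single_le_iff]
      simp [Finsupp.add_apply, Finsupp.single_apply]
      omega
    have hsub : (Finsupp.single 0 n + Finsupp.single 1 i : Fin 2 →₀ ℕ) - Finsupp.single 0 1
        = Finsupp.single 0 (n - 1) + Finsupp.single 1 i := by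
      ext x
      fin_cases x <;>
        simp [Finsupp.tsub_apply, Finsupp.add_apply, Finsupp.single_apply] <;> omega
    have h0 : (Finsupp.single 0 (n - 1) + Finsupp.single 1 i : Fin 2 →₀ ℕ) 0 = n - 1 := by
      simp [Finsupp.add_apply, Finsupp.single_apply]
    have h1 : (Finsupp.single 0 (n - 1) + Finsupp.single 1 i : Fin 2 →₀ ℕ) 1 = i := by
      simp [Finsupp.add_apply, Finsupp.single_apply]
    have hwd : Wt (Finsupp.single 0 (n - 1) + Finsupp.single 1 i) ≤ 0 := by
      simp only [Wt, h0, h1]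
      omega
    rw [F, hD, mul_assoc]
    nth_rewrite 1 [show tP = MvPowerSeries.monomial (Finsupp.single 0 1) 1 from
      MvPowerSeries.X_def 0]
    rw [MvPowerSeries.coeff_monomial_mul, if_pos hle, one_mul, hsub, key hQ _ hwd, h0, h1]
  constructor
  · have := main (n - 1) le_rfl
    rwa [if_pos rfl] at this
  · intro i hi
    have := main i (by omega)
    rwa [if_neg (by omega)] at this
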